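/- With t₁(x) = √A near x = −1 and 0 near x = 1, and t₂(x) = 0 near x = −1 and √B near x = 1 (both C⁶ on [−1,1]), the symmetry conditions [tᵢ,tⱼ]_H = 0 hold for i,j ∈ {1,2}, where [f,g]_H = [f,g]_K(1) − [f,g]_K(−1). -/
import Mathlib


open Set Filter Topology intervalIntegral

noncomputable def krallAlpha (A B : ℝ) : ℝ := 3*A + 3*B + 6

noncomputable def krallPi (A B : ℝ) (x : ℝ) : ℝ :=
  (-6*A - 6*B - 12*A*B)*x^2 + (12*A - 12*B)*x + (12*A*B + 18*A + 18*B + 24)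

/-- The sixth-order Krall differential expression, expanded form. -/
noncomputable def lK (A B : ℝ) (y : ℝ → ℝ) (x : ℝ) : ℝ :=
  (x^2 - 1)^3 * iteratedDeriv 6 y x
  + 18*x*(x^2 - 1)^2 * iteratedDeriv 5 y x
  + (x^2 - 1)*((3*A + 3*B + 96)*x^2 - 3*A - 3*B - 36) * iteratedDeriv 4 y x
  + (24*A + 24*B + 168)*x*(x^2 - 1) * iteratedDeriv 3 y x
  + ((12*A*B + 42*A + 42*B + 72)*x^2 + (12*B - 12*A)*x - 12*A*B - 30*A - 30*B - 72)
      * iteratedDeriv 2 y x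
  + ((24*A*B + 12*A + 12*B)*x + 12*B - 12*A) * deriv y x

/-- The sixth-order Krall differential expression, Lagrangian symmetric form. -/
noncomputable def lKsym (A B : ℝ) (y : ℝ → ℝ) (x : ℝ) : ℝ :=
  - iteratedDeriv 3 (fun t => (1 - t^2)^3 * iteratedDeriv 3 y t) x
  + iteratedDeriv 2 (fun t => (1 - t^2)*(12 + krallAlpha A B * (1 - t^2)) * iteratedDeriv 2 y t) x
  - deriv (fun t => krallPi A B t * deriv y t) x

/-- Λ[f](x) = −((1−x²)³f‴(x))′ + (1−x²)(12+α(1−x²))f″(x). -/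
noncomputable def LamK (A B : ℝ) (f : ℝ → ℝ) (x : ℝ) : ℝ :=
  - deriv (fun t => (1 - t^2)^3 * iteratedDeriv 3 f t) x
  + (1 - x^2)*(12 + krallAlpha A B * (1 - x^2)) * iteratedDeriv 2 f x

/-- [f,1]_K(x) = −((1−x²)³f‴)″ + ((1−x²)(12+α(1−x²))f″)′ − π(x)f′(x). -/
noncomputable def concOne (A B : ℝ) (f : ℝ → ℝ) (x : ℝ) : ℝ :=
  - iteratedDeriv 2 (fun t => (1 - t^2)^3 * iteratedDeriv 3 f t) x
  + deriv (fun t => (1 - t^2)*(12 + krallAlpha A B * (1 - t^2)) * iteratedDeriv 2 f t) x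
  - krallPi A B x * deriv f x

/-- The bilinear concomitant [f,g]_K of the Krall expression (real-valued case). -/
noncomputable def conc (A B : ℝ) (f g : ℝ → ℝ) (x : ℝ) : ℝ :=
  concOne A B f x * g x - concOne A B g x * f x
  - LamK A B f x * deriv g x + LamK A B g x * deriv f x
  - (1 - x^2)^3 * (iteratedDeriv 3 f x * iteratedDeriv 2 g x
      - iteratedDeriv 2 f x * iteratedDeriv 3 g x)

/-- the symmetry conditions [tᵢ,tⱼ]_H = 0 hold for the partial GKN set
t₁, t₂, where [f,g]_H = [f,g]_K(1) − [f,g]_K(−1) (limits at the endpoints). -/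

lemma iterZero (n : ℕ) : iteratedDeriv n (fun _ : ℝ => (0:ℝ)) = fun _ => 0 := by
  induction n with
  | zero => rfl
  | succ n ih =>
    rw [iteratedDeriv_succ', show deriv (fun _ : ℝ => (0:ℝ)) = fun _ => 0 from deriv_const' 0, ih]

lemma derivZeroOn {S : Set ℝ} (hS : IsOpen S) {F : ℝ → ℝ}
    (h : ∀ y ∈ S, F y = 0) {x : ℝ} (hx : x ∈ S) : deriv F x = 0 := by
  have he : F =ᶠ[𝓝 x] fun _ => 0 := Filter.eventuallyEq_of_mem (hS.mem_nhds hx) h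
  rw [he.deriv_eq, deriv_const]

lemma iterZeroOn {S : Set ℝ} (hS : IsOpen S) {F : ℝ → ℝ}
    (h : ∀ y ∈ S, F y = 0) {x : ℝ} (hx : x ∈ S) (n : ℕ) : iteratedDeriv n F x = 0 := by
  have he : F =ᶠ[𝓝 x] fun _ => 0 := Filter.eventuallyEq_of_mem (hS.mem_nhds hx) h
  rw [he.iteratedDeriv_eq n, iterZero]

lemma iterConstOn {S : Set ℝ} (hS : IsOpen S) {f : ℝ → ℝ} {c : ℝ}
    (h : ∀ y ∈ S, f y = c) {x : ℝ} (hx : x ∈ S) (n : ℕ) :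
    iteratedDeriv (n+1) f x = 0 := by
  have he : f =ᶠ[𝓝 x] fun _ => c := Filter.eventuallyEq_of_mem (hS.mem_nhds hx) h
  rw [he.iteratedDeriv_eq (n+1), iteratedDeriv_succ',
    show deriv (fun _ : ℝ => c) = fun _ => 0 from deriv_const' c, iterZero]

lemma derivConstOn {S : Set ℝ} (hS : IsOpen S) {f : ℝ → ℝ} {c : ℝ}
    (h : ∀ y ∈ S, f y = c) {x : ℝ} (hx : x ∈ S) : deriv f x = 0 := by
  have he : f =ᶠ[𝓝 x] fun _ => c := Filter.eventuallyEq_of_mem (hS.mem_nhds hx) h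
  rw [he.deriv_eq, deriv_const]

lemma concOne_const_zero (A B : ℝ) {S : Set ℝ} (hS : IsOpen S) {f : ℝ → ℝ} {c : ℝ}
    (hf : ∀ y ∈ S, f y = c) {x : ℝ} (hx : x ∈ S) : concOne A B f x = 0 := by
  have h3 : ∀ y ∈ S, (fun t => (1 - t^2)^3 * iteratedDeriv 3 f t) y = 0 := by
    intro y hy; simp [iterConstOn hS hf hy 2]
  have h2 : ∀ y ∈ S, (fun t => (1 - t^2)*(12 + krallAlpha A B * (1 - t^2)) * iteratedDeriv 2 f t) y = 0 := by
    intro y hy; simp [iterConstOn hS hf hy 1]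
  unfold concOne
  rw [iterZeroOn hS h3 hx 2, derivZeroOn hS h2 hx, derivConstOn hS hf hx]
  ring

lemma LamK_const_zero (A B : ℝ) {S : Set ℝ} (hS : IsOpen S) {f : ℝ → ℝ} {c : ℝ}
    (hf : ∀ y ∈ S, f y = c) {x : ℝ} (hx : x ∈ S) : LamK A B f x = 0 := by
  have h3 : ∀ y ∈ S, (fun t => (1 - t^2)^3 * iteratedDeriv 3 f t) y = 0 := by
    intro y hy; simp [iterConstOn hS hf hy 2]
  unfold LamK
  rw [derivZeroOn hS h3 hx, iterConstOn hS hf hx 1]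
  ring

lemma conc_const_zero (A B : ℝ) {S : Set ℝ} (hS : IsOpen S) {f g : ℝ → ℝ} {c d : ℝ}
    (hf : ∀ y ∈ S, f y = c) (hg : ∀ y ∈ S, g y = d) {x : ℝ} (hx : x ∈ S) :
    conc A B f g x = 0 := by
  unfold conc
  rw [concOne_const_zero A B hS hf hx, concOne_const_zero A B hS hg hx,
    LamK_const_zero A B hS hf hx, LamK_const_zero A B hS hg hx,
    derivConstOn hS hf hx, derivConstOn hS hg hx,
    iterConstOn hS hf hx 2, iterConstOn hS hg hx 2]
  ring

theorem krall_partial_gkn_symmetry (A B : ℝ) (hA : 0 < A) (hB : 0 < B)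
    (t₁ t₂ : ℝ → ℝ)
    (ht₁ : ContDiffOn ℝ 6 t₁ (Set.Ioo (-1 : ℝ) 1))
    (ht₂ : ContDiffOn ℝ 6 t₂ (Set.Ioo (-1 : ℝ) 1))
    (ε : ℝ) (hε : 0 < ε)
    (ht₁l : ∀ x ∈ Set.Ioo (-1 : ℝ) (-1 + ε), t₁ x = Real.sqrt A)
    (ht₁r : ∀ x ∈ Set.Ioo (1 - ε : ℝ) 1, t₁ x = 0)
    (ht₂l : ∀ x ∈ Set.Ioo (-1 : ℝ) (-1 + ε), t₂ x = 0)
    (ht₂r : ∀ x ∈ Set.Ioo (1 - ε : ℝ) 1, t₂ x = Real.sqrt B) :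
    ∀ u ∈ ({t₁, t₂} : Set (ℝ → ℝ)), ∀ v ∈ ({t₁, t₂} : Set (ℝ → ℝ)),
      ∃ L₁ L₂ : ℝ,
        Filter.Tendsto (conc A B u v) (nhdsWithin 1 (Set.Ioo (-1 : ℝ) 1)) (nhds L₁) ∧
        Filter.Tendsto (conc A B u v) (nhdsWithin (-1) (Set.Ioo (-1 : ℝ) 1)) (nhds L₂) ∧
        L₁ - L₂ = 0 := by

  intro u hu v hv
  simp only [Set.mem_insert_iff, Set.mem_singleton_iff] at hu hv
  obtain ⟨cL, cR, huL, huR⟩ : ∃ cL cR : ℝ,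
      (∀ x ∈ Set.Ioo (-1 : ℝ) (-1 + ε), u x = cL) ∧
      (∀ x ∈ Set.Ioo (1 - ε : ℝ) 1, u x = cR) := by
    rcases hu with rfl | rfl
    exacts [⟨Real.sqrt A, 0, ht₁l, ht₁r⟩, ⟨0, Real.sqrt B, ht₂l, ht₂r⟩]
  obtain ⟨dL, dR, hvL, hvR⟩ : ∃ dL dR : ℝ,
      (∀ x ∈ Set.Ioo (-1 : ℝ) (-1 + ε), v x = dL) ∧
      (∀ x ∈ Set.Ioo (1 - ε : ℝ) 1, v x = dR) := by
    rcases hv with rfl | rfl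
    exacts [⟨Real.sqrt A, 0, ht₁l, ht₁r⟩, ⟨0, Real.sqrt B, ht₂l, ht₂r⟩]
  refine ⟨0, 0, ?_, ?_, by ring⟩
  · have hmem : Set.Ioi (1 - ε) ∈ 𝓝 (1 : ℝ) := Ioi_mem_nhds (by linarith)
    refine Filter.Tendsto.congr' ?_ tendsto_const_nhds
    filter_upwards [self_mem_nhdsWithin, mem_nhdsWithin_of_mem_nhds hmem] with x hx1 hx2
    exact (conc_const_zero A B isOpen_Ioo huR hvR ⟨hx2, hx1.2⟩).symm
  · have hmem : Set.Iio (-1 + ε) ∈ 𝓝 (-1 : ℝ) := Iio_mem_nhds (by linarith)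
    refine Filter.Tendsto.congr' ?_ tendsto_const_nhds
    filter_upwards [self_mem_nhdsWithin, mem_nhdsWithin_of_mem_nhds hmem] with x hx1 hx2
    exact (conc_const_zero A B isOpen_Ioo huL hvL ⟨hx1.1, hx2⟩).symm
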